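/- Let τ′ > 0, C > 0, θ₁ ∈ (0,1), δ > 0, and let (k_n) be a sequence of positive integers with k_n → ∞. Suppose (a_{n,j})_{n,j ≥ 1} are nonnegative reals and (m_n) nonnegative reals such that m_n ≤ τ′/n for all n, and |a_{n,j} − m_n²| ≤ C(n^{−2} + n² θ₁^{⌊j/2⌋}) whenever j ≥ (ln n)^{1+δ}. Then lim_{n→∞} n · ∑_{j = ⌈(ln n)^{1+δ}⌉}^{⌊n/k_n⌋} a_{n,j} = 0. -/

import Mathlib

open Filter

private lemma aux_tendsto (θ₁ δ : ℝ) (h0 : 0 < θ₁) (h1 : θ₁ < 1) (hδ : 0 < δ) :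
    Tendsto (fun n : ℕ => (n : ℝ) ^ 4 * θ₁ ^ (⌈(Real.log n) ^ (1 + δ)⌉₊ / 2))
      atTop (nhds 0) := by
  have hln : Real.log θ₁ < 0 := Real.log_neg h0 h1
  set c : ℝ := -Real.log θ₁ / 2 with hc
  have hcpos : 0 < c := by simp only [hc]; linarith
  set f : ℕ → ℝ := fun n =>
    4 * Real.log n + ((⌈(Real.log n) ^ (1 + δ)⌉₊ / 2 : ℕ) : ℝ) * Real.log θ₁ with hfdef
  have hLtop : Tendsto (fun n : ℕ => Real.log n) atTop atTop :=
    Real.tendsto_log_atTop.comp tendsto_natCast_atTop_atTop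
  have hLd : Tendsto (fun n : ℕ => (Real.log n) ^ δ) atTop atTop :=
    (tendsto_rpow_atTop hδ).comp hLtop
  have hf : Tendsto f atTop atBot := by
    apply tendsto_atBot_mono' atTop
      (f₁ := fun n : ℕ => -(Real.log n) + c)
    · filter_upwards [hLtop.eventually_ge_atTop 1, hLd.eventually_ge_atTop (5 / c)]
        with n hL1 hLd5
      set L := Real.log n
      set x := L ^ (1 + δ) with hx
      set J := ⌈x⌉₊ with hJ
      have hxJ : x ≤ (J : ℝ) := Nat.le_ceil x
      have hJ2 : (J : ℝ) ≤ 2 * ((J / 2 : ℕ) : ℝ) + 1 := by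
        have : J ≤ 2 * (J / 2) + 1 := by omega
        exact_mod_cast this
      have hdiv : (x - 1) / 2 ≤ ((J / 2 : ℕ) : ℝ) := by linarith
      have h1' : ((J / 2 : ℕ) : ℝ) * Real.log θ₁ ≤ (x - 1) / 2 * Real.log θ₁ :=
        mul_le_mul_of_nonpos_right hdiv hln.le
      have hxeq : x = L * L ^ δ := by
        rw [hx, Real.rpow_add (by linarith : (0:ℝ) < L), Real.rpow_one]
      have h5 : 5 / c ≤ L ^ δ := hLd5
      have hcl : 5 ≤ c * L ^ δ := by
        rw [div_le_iff₀ hcpos] at h5; linarith [h5]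
      have hkey : (x - 1) / 2 * Real.log θ₁ = -(c * x) + c := by
        simp only [hc]; ring
      have hcx : 5 * L ≤ c * x := by
        rw [hxeq, ← mul_assoc]
        calc 5 * L = L * 5 := by ring
        _ ≤ L * (c * L ^ δ) := by
            exact mul_le_mul_of_nonneg_left hcl (by linarith)
        _ = c * L * L ^ δ := by ring
      simp only [hfdef]
      calc 4 * L + ((J / 2 : ℕ) : ℝ) * Real.log θ₁
          ≤ 4 * L + ((x - 1) / 2 * Real.log θ₁) := by linarith
        _ = 4 * L - c * x + c := by rw [hkey]; ring
        _ ≤ 4 * L - 5 * L + c := by linarith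
        _ = -L + c := by ring
    · exact tendsto_atBot_add_const_right _ c (tendsto_neg_atBot_iff.mpr hLtop)
  have hexp : Tendsto (fun n : ℕ => Real.exp (f n)) atTop (nhds 0) :=
    Real.tendsto_exp_atBot.comp hf
  apply hexp.congr'
  filter_upwards [eventually_ge_atTop 1] with n hn
  have hnpos : (0 : ℝ) < (n : ℝ) := by exact_mod_cast hn
  simp only [hfdef]
  rw [Real.exp_add, Real.exp_nat_mul, Real.exp_log h0]
  congr 1
  have : (4 : ℝ) * Real.log n = Real.log ((n : ℝ) ^ 4) := by
    rw [Real.log_pow]; norm_num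
  rw [this, Real.exp_log (by positivity)]

/-- The part of condition `D'_q(u_n)` covering return times `j` between `(ln n)^{1+δ}`
and `n/k_n`, derived from the decorrelation bound of condition `D_q(u_n)`. -/
theorem stmt6 (τ' C θ₁ δ : ℝ) (hτ' : 0 < τ') (hC : 0 < C)
    (hθ₁ : θ₁ ∈ Set.Ioo (0 : ℝ) 1) (hδ : 0 < δ)
    (k : ℕ → ℕ) (hkpos : ∀ n, 0 < k n) (hk : Tendsto k atTop atTop)
    (a : ℕ → ℕ → ℝ) (ha0 : ∀ n j, 0 ≤ a n j)
    (m : ℕ → ℝ) (hm0 : ∀ n, 0 ≤ m n) (hm : ∀ n, 1 ≤ n → m n ≤ τ' / n)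
    (hbound : ∀ n j : ℕ, 1 ≤ n → (Real.log n) ^ (1 + δ) ≤ (j : ℝ) →
      |a n j - (m n) ^ 2| ≤ C * ((n : ℝ)⁻¹ ^ 2 + (n : ℝ) ^ 2 * θ₁ ^ (j / 2))) :
    Tendsto (fun n : ℕ =>
        (n : ℝ) * ∑ j ∈ Finset.Icc ⌈(Real.log n) ^ (1 + δ)⌉₊ (n / k n), a n j)
      atTop (nhds 0) := by
  obtain ⟨hθ0, hθ1⟩ := hθ₁
  set g : ℕ → ℝ := fun n =>
    (τ' ^ 2 + C) / (k n) + C * ((n : ℝ) ^ 4 * θ₁ ^ (⌈(Real.log n) ^ (1 + δ)⌉₊ / 2))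
    with hgdef
  have hg : Tendsto g atTop (nhds 0) := by
    have h1 : Tendsto (fun n : ℕ => (τ' ^ 2 + C) / (k n : ℝ)) atTop (nhds 0) :=
      tendsto_const_nhds.div_atTop (tendsto_natCast_atTop_atTop.comp hk)
    have h2 := (aux_tendsto θ₁ δ hθ0 hθ1 hδ).const_mul C
    simpa using h1.add h2
  apply squeeze_zero' ?_ ?_ hg
  · filter_upwards [eventually_ge_atTop 1] with n hn
    have hnpos : (0 : ℝ) ≤ (n : ℝ) := by positivity
    exact mul_nonneg hnpos (Finset.sum_nonneg fun j _ => ha0 n j)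
  · have hloge : Tendsto (fun n : ℕ => Real.log n) atTop atTop :=
      Real.tendsto_log_atTop.comp tendsto_natCast_atTop_atTop
    filter_upwards [eventually_ge_atTop 1, hloge.eventually_gt_atTop 0] with n hn hL
    have hn1 : (1 : ℝ) ≤ (n : ℝ) := by exact_mod_cast hn
    have hnpos : (0 : ℝ) < (n : ℝ) := by linarith
    set J := ⌈(Real.log n) ^ (1 + δ)⌉₊ with hJ
    set M := n / k n with hM
    have hxpos : (0 : ℝ) < (Real.log n) ^ (1 + δ) := Real.rpow_pos_of_pos hL _
    have hJ1 : 1 ≤ J := Nat.one_le_ceil_iff.mpr hxpos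
    set B : ℝ := m n ^ 2 + C * (n : ℝ)⁻¹ ^ 2 + C * (n : ℝ) ^ 2 * θ₁ ^ (J / 2) with hB
    have hsum : ∑ j ∈ Finset.Icc J M, a n j ≤ (Finset.Icc J M).card • B := by
      apply Finset.sum_le_card_nsmul
      intro j hj
      obtain ⟨hj1, hj2⟩ := Finset.mem_Icc.mp hj
      have hjx : (Real.log n) ^ (1 + δ) ≤ (j : ℝ) :=
        le_trans (Nat.le_ceil _) (by exact_mod_cast hj1)
      have := hbound n j hn hjx
      have ha : a n j ≤ m n ^ 2 + C * ((n : ℝ)⁻¹ ^ 2 + (n : ℝ) ^ 2 * θ₁ ^ (j / 2)) := by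
        have := abs_le.mp this
        linarith [this.2]
      have hθj : θ₁ ^ (j / 2) ≤ θ₁ ^ (J / 2) :=
        pow_le_pow_of_le_one hθ0.le hθ1.le (Nat.div_le_div_right hj1)
      have hmul : C * ((n : ℝ) ^ 2 * θ₁ ^ (j / 2)) ≤ C * ((n : ℝ) ^ 2 * θ₁ ^ (J / 2)) := by
        apply mul_le_mul_of_nonneg_left _ hC.le
        exact mul_le_mul_of_nonneg_left hθj (by positivity)
      simp only [hB]
      nlinarith [ha, hmul]
    have hBpos : 0 ≤ B := by
      have := hm0 n
      have : 0 ≤ m n ^ 2 := sq_nonneg _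
      have h1 : 0 ≤ C * (n : ℝ)⁻¹ ^ 2 := by positivity
      have h2 : 0 ≤ C * (n : ℝ) ^ 2 * θ₁ ^ (J / 2) := by positivity
      simp only [hB]; linarith
    have hcard : (Finset.Icc J M).card ≤ M := by
      rw [Nat.card_Icc]
      have := Nat.sub_le_sub_left hJ1 (M + 1)
      simpa using this
    have hcardn : (Finset.Icc J M).card ≤ n := le_trans hcard (Nat.div_le_self n (k n))
    have hcardR : ((Finset.Icc J M).card : ℝ) ≤ (n : ℝ) / (k n) :=
      le_trans (by exact_mod_cast hcard) Nat.cast_div_le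
    have hcardRn : ((Finset.Icc J M).card : ℝ) ≤ (n : ℝ) := by exact_mod_cast hcardn
    have hkn : (0 : ℝ) < (k n : ℝ) := by exact_mod_cast hkpos n
    -- split B
    have hmn : m n ≤ τ' / n := hm n hn
    have hB1 : m n ^ 2 + C * (n : ℝ)⁻¹ ^ 2 ≤ (τ' ^ 2 + C) / (n : ℝ) ^ 2 := by
      have hmsq : m n ^ 2 ≤ (τ' / n) ^ 2 := by
        apply sq_le_sq' _ hmn
        have := hm0 n
        have : 0 < τ' / (n : ℝ) := by positivity
        linarith [hm0 n]
      have : (τ' / (n : ℝ)) ^ 2 = τ' ^ 2 / (n : ℝ) ^ 2 := by rw [div_pow]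
      rw [this] at hmsq
      have hinv : (n : ℝ)⁻¹ ^ 2 = 1 / (n : ℝ) ^ 2 := by
        rw [inv_pow]; exact inv_eq_one_div _
      rw [hinv, add_div]
      have hce : C / (n:ℝ)^2 = C * (1/(n:ℝ)^2) := by ring
      linarith [hmsq, hce]
    calc (n : ℝ) * ∑ j ∈ Finset.Icc J M, a n j
        ≤ (n : ℝ) * ((Finset.Icc J M).card • B) := by
          exact mul_le_mul_of_nonneg_left hsum hnpos.le
      _ = (n : ℝ) * ((Finset.Icc J M).card : ℝ) * (m n ^ 2 + C * (n : ℝ)⁻¹ ^ 2)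
          + (n : ℝ) * ((Finset.Icc J M).card : ℝ) * (C * (n : ℝ) ^ 2 * θ₁ ^ (J / 2)) := by
          rw [nsmul_eq_mul, hB]; ring
      _ ≤ (n : ℝ) * ((n : ℝ) / (k n)) * ((τ' ^ 2 + C) / (n : ℝ) ^ 2)
          + (n : ℝ) * (n : ℝ) * (C * (n : ℝ) ^ 2 * θ₁ ^ (J / 2)) := by
          apply add_le_add
          · apply mul_le_mul
            · exact mul_le_mul_of_nonneg_left hcardR hnpos.le
            · exact hB1
            · positivity
            · positivity
          · apply mul_le_mul_of_nonneg_right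
            · exact mul_le_mul_of_nonneg_left hcardRn hnpos.le
            · positivity
      _ ≤ g n := by
          simp only [hgdef]
          have heq1 : (n : ℝ) * ((n : ℝ) / (k n)) * ((τ' ^ 2 + C) / (n : ℝ) ^ 2)
              = (τ' ^ 2 + C) / (k n) := by
            field_simp
          have heq2 : (n : ℝ) * (n : ℝ) * (C * (n : ℝ) ^ 2 * θ₁ ^ (J / 2))
              = C * ((n : ℝ) ^ 4 * θ₁ ^ (J / 2)) := by ring
          rw [heq1, heq2]
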